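/- Let L be a Latin square of even order n containing a subsquare A of order n/2 which has a near-transversal (a partial transversal of A of length n/2 - 1). Then L contains a maximal partial transversal of length ℓ for every ℓ with n/2 < ℓ ≤ (3/4)n and ℓ ≡ n/2 (mod 2). -/

import Mathlib

/-- A Latin square of order `n` as a set of triples `(r,c,s)`:
any two coordinates determine the third uniquely. -/
def IsLatinSquare {n : ℕ} (L : Finset (Fin n × Fin n × Fin n)) : Prop :=
  (∀ r c : Fin n, ∃! s : Fin n, (r, c, s) ∈ L) ∧
  (∀ r s : Fin n, ∃! c : Fin n, (r, c, s) ∈ L) ∧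
  (∀ c s : Fin n, ∃! r : Fin n, (r, c, s) ∈ L)

/-- A partial transversal: a subset of the triples with pairwise distinct
rows, columns and symbols. -/
def IsPartialTransversal {α β γ : Type*} (L T : Finset (α × β × γ)) : Prop :=
  T ⊆ L ∧ ∀ t ∈ T, ∀ t' ∈ T, t ≠ t' →
    t.1 ≠ t'.1 ∧ t.2.1 ≠ t'.2.1 ∧ t.2.2 ≠ t'.2.2

/-- A maximal partial transversal: one not properly contained in any
larger partial transversal. -/
def IsMaximalPartialTransversal {α β γ : Type*} (L T : Finset (α × β × γ)) : Prop :=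
  IsPartialTransversal L T ∧
    ∀ T' : Finset (α × β × γ), IsPartialTransversal L T' → T ⊆ T' → T' = T


lemma pt_mono {α β γ : Type*} {L T T' : Finset (α × β × γ)}
    (h : IsPartialTransversal L T) (hsub : T' ⊆ T) : IsPartialTransversal L T' :=
  ⟨hsub.trans h.1, fun t ht t' ht' => h.2 t (hsub ht) t' (hsub ht')⟩

lemma pt_union {α β γ : Type*} [DecidableEq α] [DecidableEq β] [DecidableEq γ]
    {L T1 T2 : Finset (α × β × γ)}
    (h1 : IsPartialTransversal L T1) (h2 : IsPartialTransversal L T2)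
    (hsep : ∀ t ∈ T1, ∀ t' ∈ T2, t.1 ≠ t'.1 ∧ t.2.1 ≠ t'.2.1 ∧ t.2.2 ≠ t'.2.2) :
    IsPartialTransversal L (T1 ∪ T2) := by
  refine ⟨Finset.union_subset h1.1 h2.1, ?_⟩
  intro t ht t' ht' hne
  rcases Finset.mem_union.mp ht with h | h <;> rcases Finset.mem_union.mp ht' with h' | h'
  · exact h1.2 t h t' h' hne
  · exact hsep t h t' h'
  · obtain ⟨a, b, c⟩ := hsep t' h' t h; exact ⟨a.symm, b.symm, c.symm⟩
  · exact h2.2 t h t' h' hne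

lemma disj_of_sep {α β γ : Type*} [DecidableEq α] [DecidableEq β] [DecidableEq γ]
    {T1 T2 : Finset (α × β × γ)}
    (hsep : ∀ t ∈ T1, ∀ t' ∈ T2, t.1 ≠ t'.1 ∧ t.2.1 ≠ t'.2.1 ∧ t.2.2 ≠ t'.2.2) :
    Disjoint T1 T2 :=
  Finset.disjoint_left.mpr fun t h1 h2 => (hsep t h1 t h2).1 rfl

lemma pt_image_card {α β γ : Type*} [DecidableEq α] [DecidableEq β] [DecidableEq γ]
    {L T : Finset (α × β × γ)} (h : IsPartialTransversal L T) :
    (T.image (fun t => t.1)).card = T.card ∧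
    (T.image (fun t => t.2.1)).card = T.card ∧
    (T.image (fun t => t.2.2)).card = T.card := by
  refine ⟨Finset.card_image_of_injOn ?_, Finset.card_image_of_injOn ?_,
    Finset.card_image_of_injOn ?_⟩ <;>
  · intro t ht t' ht' he
    by_contra hne
    obtain ⟨a, b, c⟩ := h.2 t ht t' ht' hne
    first | exact a he | exact b he | exact c he

lemma exists_avoid {α β : Type*} [DecidableEq β] (f : α → β) (A : Finset α) (F : Finset β)
    (hf : Set.InjOn f A) (h : F.card < A.card) : ∃ a ∈ A, f a ∉ F := by
  by_contra hc
  push_neg at hc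
  have hsub : A.image f ⊆ F := by
    intro b hb; obtain ⟨a, ha, rfl⟩ := Finset.mem_image.mp hb; exact hc a ha
  have := Finset.card_le_card hsub
  rw [Finset.card_image_of_injOn hf] at this
  omega
lemma quadrant {n m : ℕ} {L : Finset (Fin n × Fin n × Fin n)} {R C S : Finset (Fin n)}
    (hnm : n = 2 * m) (hR : R.card = m) (hC : C.card = m) (hS : S.card = m)
    (hSdef : S = (L.filter (fun t => t.1 ∈ R ∧ t.2.1 ∈ C)).image (fun t => t.2.2))
    (symf colf rowf : Fin n → Fin n → Fin n)
    (hsymf : ∀ r c, (r, c, symf r c) ∈ L)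
    (hsymu : ∀ r c s, (r, c, s) ∈ L → s = symf r c)
    (hcolf : ∀ r s, (r, colf r s, s) ∈ L)
    (hcolu : ∀ r s c, (r, c, s) ∈ L → c = colf r s)
    (hrowf : ∀ c s, (rowf c s, c, s) ∈ L)
    (hrowu : ∀ c s r, (r, c, s) ∈ L → r = rowf c s) :
    ∀ t ∈ L, (t.2.2 ∈ S ↔ (t.1 ∈ R ↔ t.2.1 ∈ C)) := by
  -- quadrant A: symbols in S
  have hA : ∀ r c s, r ∈ R → c ∈ C → (r, c, s) ∈ L → s ∈ S := by
    intro r c s hr hc h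
    rw [hSdef]
    exact Finset.mem_image.mpr ⟨(r, c, s), Finset.mem_filter.mpr ⟨h, hr, hc⟩, rfl⟩
  -- the row slice over C of a row in R covers S
  have rowImg : ∀ r ∈ R, C.image (symf r) = S := by
    intro r hr
    apply Finset.eq_of_subset_of_card_le
    · intro s hs
      obtain ⟨c, hc, rfl⟩ := Finset.mem_image.mp hs
      exact hA r c _ hr hc (hsymf r c)
    · rw [Finset.card_image_of_injOn, hS, hC]
      intro c hc c' hc' he
      have h1 := hcolu r (symf r c) c (hsymf r c)
      have h2 := hcolu r (symf r c) c' (he ▸ hsymf r c')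
      rw [h1, h2]
  have colImg : ∀ c ∈ C, R.image (fun r => symf r c) = S := by
    intro c hc
    apply Finset.eq_of_subset_of_card_le
    · intro s hs
      obtain ⟨r, hr, rfl⟩ := Finset.mem_image.mp hs
      exact hA r c _ hr hc (hsymf r c)
    · rw [Finset.card_image_of_injOn, hS, hR]
      intro r hr r' hr' he
      have h1 := hrowu c (symf r c) r (hsymf r c)
      have h2 := hrowu c (symf r c) r' (by simpa [he] using hsymf r' c)
      rw [h1, h2]
  have hB : ∀ r c s, r ∈ R → c ∉ C → (r, c, s) ∈ L → s ∉ S := by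
    intro r c s hr hc h hsS
    rw [← rowImg r hr] at hsS
    obtain ⟨c', hc', he⟩ := Finset.mem_image.mp hsS
    have h1 := hcolu r s c h
    have h2 := hcolu r s c' (he ▸ hsymf r c')
    exact hc (h1 ▸ h2 ▸ hc')
  have hB' : ∀ r c s, r ∉ R → c ∈ C → (r, c, s) ∈ L → s ∉ S := by
    intro r c s hr hc h hsS
    rw [← colImg c hc] at hsS
    obtain ⟨r', hr', he⟩ := Finset.mem_image.mp hsS
    have h1 := hrowu c s r h
    have h2 := hrowu c s r' (he ▸ hsymf r' c)
    exact hr (h1 ▸ h2 ▸ hr')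
  have hD : ∀ r c s, r ∉ R → c ∉ C → (r, c, s) ∈ L → s ∈ S := by
    intro r c s hr hc h
    by_contra hsS
    have himg : C.image (symf r) = Sᶜ := by
      apply Finset.eq_of_subset_of_card_le
      · intro x hx
        obtain ⟨c', hc', rfl⟩ := Finset.mem_image.mp hx
        exact Finset.mem_compl.mpr (hB' r c' _ hr hc' (hsymf r c'))
      · rw [Finset.card_image_of_injOn, Finset.card_compl, hC, hS]
        · simp only [Fintype.card_fin]; omega
        · intro c1 hc1 c2 hc2 he
          have h1 := hcolu r (symf r c1) c1 (hsymf r c1)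
          have h2 := hcolu r (symf r c1) c2 (he ▸ hsymf r c2)
          rw [h1, h2]
    have : s ∈ C.image (symf r) := himg ▸ Finset.mem_compl.mpr hsS
    obtain ⟨c', hc', he⟩ := Finset.mem_image.mp this
    have h1 := hcolu r s c h
    have h2 := hcolu r s c' (he ▸ hsymf r c')
    exact hc (h1 ▸ h2 ▸ hc')
  rintro ⟨r, c, s⟩ ht
  by_cases hr : r ∈ R <;> by_cases hc : c ∈ C <;> simp only
  · exact ⟨fun _ => iff_of_true hr hc, fun _ => hA r c s hr hc ht⟩
  · constructor
    · intro hs; exact absurd hs (hB r c s hr hc ht)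
    · intro hiff; exact absurd (hiff.mp hr) hc
  · constructor
    · intro hs; exact absurd hs (hB' r c s hr hc ht)
    · intro hiff; exact absurd (hiff.mpr hc) hr
  · constructor
    · intro _; constructor <;> (intro h; first | exact absurd h hr | exact absurd h hc)
    · intro _; exact hD r c s hr hc ht
/-- Greedy construction in quadrant D: a partial transversal with prescribed
symbol set `X ⊆ S`, avoiding rows of `R` and columns of `C`. -/
lemma greedyD {n m : ℕ} {L : Finset (Fin n × Fin n × Fin n)} {R C S : Finset (Fin n)}
    (hnm : n = 2 * m) (hR : R.card = m)
    (colf rowf : Fin n → Fin n → Fin n)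
    (hcolf : ∀ r s, (r, colf r s, s) ∈ L)
    (hrowu : ∀ c s r, (r, c, s) ∈ L → r = rowf c s)
    (hQ : ∀ t ∈ L, (t.2.2 ∈ S ↔ (t.1 ∈ R ↔ t.2.1 ∈ C))) :
    ∀ X : Finset (Fin n), X ⊆ S → 2 * X.card ≤ m →
      ∃ P : Finset (Fin n × Fin n × Fin n), IsPartialTransversal L P ∧
        P.card = X.card ∧ P.image (fun t => t.2.2) = X ∧
        ∀ t ∈ P, t.1 ∉ R ∧ t.2.1 ∉ C := by
  intro X
  induction X using Finset.induction_on with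
  | empty =>
    intro _ _
    exact ⟨∅, ⟨by simp, by simp⟩, by simp, by simp, by simp⟩
  | @insert s X' hs ih =>
    intro hsub hbound
    rw [Finset.card_insert_of_notMem hs] at hbound
    obtain ⟨P', hPT', hcard', himg', hout'⟩ :=
      ih (fun x hx => hsub (Finset.mem_insert_of_mem hx)) (by omega)
    have hsS : s ∈ S := hsub (Finset.mem_insert_self s X')
    -- available rows
    set A : Finset (Fin n) := (R ∪ P'.image (fun t => t.1))ᶜ with hA
    have hAcard : m - X'.card ≤ A.card := by
      have h1 : (R ∪ P'.image (fun t => t.1)).card ≤ m + X'.card := by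
        have h2 := Finset.card_union_le R (P'.image (fun t => t.1))
        have h3 := Finset.card_image_le (s := P') (f := fun t => t.1)
        omega
      have h4 : A.card = n - (R ∪ P'.image (fun t => t.1)).card := by
        rw [hA, Finset.card_compl, Fintype.card_fin]
      omega
    have hinj : Set.InjOn (fun r => colf r s) (A : Set (Fin n)) := by
      intro r _ r' _ he
      have h1 := hrowu (colf r s) s r (hcolf r s)
      have h2 := hrowu (colf r s) s r' (by simpa [he] using hcolf r' s)
      rw [h1, h2]
    have hlt : (P'.image (fun t => t.2.1)).card < A.card := by
      have := Finset.card_image_le (s := P') (f := fun t => t.2.1)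
      omega
    obtain ⟨r, hrA, hcnot⟩ := exists_avoid _ A _ hinj hlt
    have hrR : r ∉ R := fun h => (Finset.mem_compl.mp hrA) (Finset.mem_union_left _ h)
    have hrrows : r ∉ P'.image (fun t => t.1) :=
      fun h => (Finset.mem_compl.mp hrA) (Finset.mem_union_right _ h)
    set c := colf r s with hc
    have htL : (r, c, s) ∈ L := hcolf r s
    have hcC : c ∉ C := by
      intro hcmem
      exact hrR (((hQ (r, c, s) htL).mp hsS).mpr hcmem)
    have hnotmem : (r, c, s) ∉ P' := fun h =>
      hrrows (Finset.mem_image.mpr ⟨(r, c, s), h, rfl⟩)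
    have hsep : ∀ u ∈ P', r ≠ u.1 ∧ c ≠ u.2.1 ∧ s ≠ u.2.2 := by
      intro u hu
      refine ⟨?_, ?_, ?_⟩
      · intro he; exact hrrows (Finset.mem_image.mpr ⟨u, hu, he.symm⟩)
      · intro he; exact hcnot (Finset.mem_image.mpr ⟨u, hu, he.symm⟩)
      · intro he
        exact hs (himg' ▸ Finset.mem_image.mpr ⟨u, hu, he.symm⟩)
    refine ⟨insert (r, c, s) P', ⟨Finset.insert_subset htL hPT'.1, ?_⟩, ?_, ?_, ?_⟩
    · intro t ht t' ht' hne
      rcases Finset.mem_insert.mp ht with h | h <;> rcases Finset.mem_insert.mp ht' with h' | h'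
      · exact absurd (h.trans h'.symm) hne
      · exact h ▸ hsep t' h'
      · obtain ⟨a, b, cc⟩ := hsep t h
        exact h' ▸ ⟨a.symm, b.symm, cc.symm⟩
      · exact hPT'.2 t h t' h' hne
    · rw [Finset.card_insert_of_notMem hnotmem, hcard',
        Finset.card_insert_of_notMem hs]
    · rw [Finset.image_insert, himg']
    · intro t ht
      rcases Finset.mem_insert.mp ht with h | h
      · exact h ▸ ⟨hrR, hcC⟩
      · exact hout' t h

/-- Greedy construction in quadrant B: rows prescribed (`Y ⊆ R`), columns
avoiding `C` and a forbidden set `F`, symbols avoiding `S`. -/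
lemma greedyB {n m : ℕ} {L : Finset (Fin n × Fin n × Fin n)} {R C S : Finset (Fin n)}
    (hnm : n = 2 * m) (hS : S.card = m)
    (colf symf : Fin n → Fin n → Fin n)
    (hcolf : ∀ r s, (r, colf r s, s) ∈ L)
    (hsymu : ∀ r c s, (r, c, s) ∈ L → s = symf r c)
    (hQ : ∀ t ∈ L, (t.2.2 ∈ S ↔ (t.1 ∈ R ↔ t.2.1 ∈ C)))
    (F : Finset (Fin n)) :
    ∀ Y : Finset (Fin n), Y ⊆ R → F.card + 2 * Y.card ≤ m + 1 →
      ∃ P : Finset (Fin n × Fin n × Fin n), IsPartialTransversal L P ∧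
        P.card = Y.card ∧ P.image (fun t => t.1) = Y ∧
        ∀ t ∈ P, (t.2.1 ∉ C ∧ t.2.1 ∉ F) ∧ t.2.2 ∉ S := by
  intro Y
  induction Y using Finset.induction_on with
  | empty =>
    intro _ _
    exact ⟨∅, ⟨by simp, by simp⟩, by simp, by simp, by simp⟩
  | @insert r Y' hr ih =>
    intro hsub hbound
    rw [Finset.card_insert_of_notMem hr] at hbound
    obtain ⟨P', hPT', hcard', himg', hout'⟩ :=
      ih (fun x hx => hsub (Finset.mem_insert_of_mem hx)) (by omega)
    have hrR : r ∈ R := hsub (Finset.mem_insert_self r Y')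
    -- available symbols
    set A : Finset (Fin n) := (S ∪ P'.image (fun t => t.2.2))ᶜ with hA
    have hAcard : m - Y'.card ≤ A.card := by
      have h2 := Finset.card_union_le S (P'.image (fun t => t.2.2))
      have h3 := Finset.card_image_le (s := P') (f := fun t => t.2.2)
      have h4 : A.card = n - (S ∪ P'.image (fun t => t.2.2)).card := by
        rw [hA, Finset.card_compl, Fintype.card_fin]
      omega
    have hinj : Set.InjOn (fun s => colf r s) (A : Set (Fin n)) := by
      intro s _ s' _ he
      have h1 := hsymu r (colf r s) s (hcolf r s)
      have h2 := hsymu r (colf r s) s' (by simpa [he] using hcolf r s')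
      rw [h1, h2]
    have hlt : (F ∪ P'.image (fun t => t.2.1)).card < A.card := by
      have h2 := Finset.card_union_le F (P'.image (fun t => t.2.1))
      have h3 := Finset.card_image_le (s := P') (f := fun t => t.2.1)
      omega
    obtain ⟨s, hsA, hcnot⟩ := exists_avoid _ A _ hinj hlt
    have hsS : s ∉ S := fun h => (Finset.mem_compl.mp hsA) (Finset.mem_union_left _ h)
    have hssyms : s ∉ P'.image (fun t => t.2.2) :=
      fun h => (Finset.mem_compl.mp hsA) (Finset.mem_union_right _ h)
    set c := colf r s with hc
    have htL : (r, c, s) ∈ L := hcolf r s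
    have hcF : c ∉ F := fun h => hcnot (Finset.mem_union_left _ h)
    have hccols : c ∉ P'.image (fun t => t.2.1) :=
      fun h => hcnot (Finset.mem_union_right _ h)
    have hcC : c ∉ C := by
      intro hcmem
      exact hsS ((hQ (r, c, s) htL).mpr (iff_of_true hrR hcmem))
    have hnotmem : (r, c, s) ∉ P' := fun h =>
      hccols (Finset.mem_image.mpr ⟨(r, c, s), h, rfl⟩)
    have hsep : ∀ u ∈ P', r ≠ u.1 ∧ c ≠ u.2.1 ∧ s ≠ u.2.2 := by
      intro u hu
      refine ⟨?_, ?_, ?_⟩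
      · intro he; exact hr (himg' ▸ Finset.mem_image.mpr ⟨u, hu, he.symm⟩)
      · intro he; exact hccols (Finset.mem_image.mpr ⟨u, hu, he.symm⟩)
      · intro he; exact hssyms (Finset.mem_image.mpr ⟨u, hu, he.symm⟩)
    refine ⟨insert (r, c, s) P', ⟨Finset.insert_subset htL hPT'.1, ?_⟩, ?_, ?_, ?_⟩
    · intro t ht t' ht' hne
      rcases Finset.mem_insert.mp ht with h | h <;> rcases Finset.mem_insert.mp ht' with h' | h'
      · exact absurd (h.trans h'.symm) hne
      · exact h ▸ hsep t' h'
      · obtain ⟨a, b, cc⟩ := hsep t h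
        exact h' ▸ ⟨a.symm, b.symm, cc.symm⟩
      · exact hPT'.2 t h t' h' hne
    · rw [Finset.card_insert_of_notMem hnotmem, hcard',
        Finset.card_insert_of_notMem hr]
    · rw [Finset.image_insert, himg']
    · intro t ht
      rcases Finset.mem_insert.mp ht with h | h
      · exact h ▸ ⟨⟨hcC, hcF⟩, hsS⟩
      · exact hout' t h

/-- Greedy construction in quadrant C: columns prescribed (`Z ⊆ C`), rows
avoiding `R` and `Fr`, symbols avoiding `S` and `Fs`. -/
lemma greedyC {n m : ℕ} {L : Finset (Fin n × Fin n × Fin n)} {R C S : Finset (Fin n)}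
    (hnm : n = 2 * m) (hS : S.card = m)
    (rowf symf : Fin n → Fin n → Fin n)
    (hrowf : ∀ c s, (rowf c s, c, s) ∈ L)
    (hsymu : ∀ r c s, (r, c, s) ∈ L → s = symf r c)
    (hQ : ∀ t ∈ L, (t.2.2 ∈ S ↔ (t.1 ∈ R ↔ t.2.1 ∈ C)))
    (Fr Fs : Finset (Fin n)) :
    ∀ Z : Finset (Fin n), Z ⊆ C → Fr.card + Fs.card + 2 * Z.card ≤ m + 1 →
      ∃ P : Finset (Fin n × Fin n × Fin n), IsPartialTransversal L P ∧
        P.card = Z.card ∧ P.image (fun t => t.2.1) = Z ∧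
        ∀ t ∈ P, (t.1 ∉ R ∧ t.1 ∉ Fr) ∧ (t.2.2 ∉ S ∧ t.2.2 ∉ Fs) := by
  intro Z
  induction Z using Finset.induction_on with
  | empty =>
    intro _ _
    exact ⟨∅, ⟨by simp, by simp⟩, by simp, by simp, by simp⟩
  | @insert c Z' hc ih =>
    intro hsub hbound
    rw [Finset.card_insert_of_notMem hc] at hbound
    obtain ⟨P', hPT', hcard', himg', hout'⟩ :=
      ih (fun x hx => hsub (Finset.mem_insert_of_mem hx)) (by omega)
    have hcC : c ∈ C := hsub (Finset.mem_insert_self c Z')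
    set A : Finset (Fin n) := (S ∪ Fs ∪ P'.image (fun t => t.2.2))ᶜ with hA
    have hAcard : m - Fs.card - Z'.card ≤ A.card := by
      have h2 := Finset.card_union_le (S ∪ Fs) (P'.image (fun t => t.2.2))
      have h2' := Finset.card_union_le S Fs
      have h3 := Finset.card_image_le (s := P') (f := fun t => t.2.2)
      have h4 : A.card = n - (S ∪ Fs ∪ P'.image (fun t => t.2.2)).card := by
        rw [hA, Finset.card_compl, Fintype.card_fin]
      omega
    have hinj : Set.InjOn (fun s => rowf c s) (A : Set (Fin n)) := by
      intro s _ s' _ he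
      have h1 := hsymu (rowf c s) c s (hrowf c s)
      have h2 := hsymu (rowf c s) c s' (by simpa [he] using hrowf c s')
      rw [h1, h2]
    have hlt : (Fr ∪ P'.image (fun t => t.1)).card < A.card := by
      have h2 := Finset.card_union_le Fr (P'.image (fun t => t.1))
      have h3 := Finset.card_image_le (s := P') (f := fun t => t.1)
      omega
    obtain ⟨s, hsA, hrnot⟩ := exists_avoid _ A _ hinj hlt
    have hsS : s ∉ S := fun h =>
      (Finset.mem_compl.mp hsA) (Finset.mem_union_left _ (Finset.mem_union_left _ h))
    have hsFs : s ∉ Fs := fun h =>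
      (Finset.mem_compl.mp hsA) (Finset.mem_union_left _ (Finset.mem_union_right _ h))
    have hssyms : s ∉ P'.image (fun t => t.2.2) :=
      fun h => (Finset.mem_compl.mp hsA) (Finset.mem_union_right _ h)
    set r := rowf c s with hrdef
    have htL : (r, c, s) ∈ L := hrowf c s
    have hrFr : r ∉ Fr := fun h => hrnot (Finset.mem_union_left _ h)
    have hrrows : r ∉ P'.image (fun t => t.1) :=
      fun h => hrnot (Finset.mem_union_right _ h)
    have hrR : r ∉ R := by
      intro hrmem
      exact hsS ((hQ (r, c, s) htL).mpr (iff_of_true hrmem hcC))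
    have hnotmem : (r, c, s) ∉ P' := fun h =>
      hrrows (Finset.mem_image.mpr ⟨(r, c, s), h, rfl⟩)
    have hsep : ∀ u ∈ P', r ≠ u.1 ∧ c ≠ u.2.1 ∧ s ≠ u.2.2 := by
      intro u hu
      refine ⟨?_, ?_, ?_⟩
      · intro he; exact hrrows (Finset.mem_image.mpr ⟨u, hu, he.symm⟩)
      · intro he; exact hc (himg' ▸ Finset.mem_image.mpr ⟨u, hu, he.symm⟩)
      · intro he; exact hssyms (Finset.mem_image.mpr ⟨u, hu, he.symm⟩)
    refine ⟨insert (r, c, s) P', ⟨Finset.insert_subset htL hPT'.1, ?_⟩, ?_, ?_, ?_⟩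
    · intro t ht t' ht' hne
      rcases Finset.mem_insert.mp ht with h | h <;> rcases Finset.mem_insert.mp ht' with h' | h'
      · exact absurd (h.trans h'.symm) hne
      · exact h ▸ hsep t' h'
      · obtain ⟨a, b, cc⟩ := hsep t h
        exact h' ▸ ⟨a.symm, b.symm, cc.symm⟩
      · exact hPT'.2 t h t' h' hne
    · rw [Finset.card_insert_of_notMem hnotmem, hcard',
        Finset.card_insert_of_notMem hc]
    · rw [Finset.image_insert, himg']
    · intro t ht
      rcases Finset.mem_insert.mp ht with h | h
      · exact h ▸ ⟨⟨hrR, hrFr⟩, ⟨hsS, hsFs⟩⟩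
      · exact hout' t h
lemma maximal_of {n : ℕ} {L : Finset (Fin n × Fin n × Fin n)} {R C S : Finset (Fin n)}
    (hQ : ∀ t ∈ L, (t.2.2 ∈ S ↔ (t.1 ∈ R ↔ t.2.1 ∈ C)))
    (T : Finset (Fin n × Fin n × Fin n)) (hPT : IsPartialTransversal L T)
    (hrow : R ⊆ T.image (fun t => t.1)) (hcol : C ⊆ T.image (fun t => t.2.1))
    (hsym : S ⊆ T.image (fun t => t.2.2)) :
    IsMaximalPartialTransversal L T := by
  refine ⟨hPT, fun T' hT' hsub => ?_⟩
  apply Finset.Subset.antisymm _ hsub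
  intro t ht
  by_contra htT
  have hne : ∀ u ∈ T, t ≠ u := fun u hu he => htT (he ▸ hu)
  have h1 : t.1 ∉ R := by
    intro h
    obtain ⟨u, hu, hu1⟩ := Finset.mem_image.mp (hrow h)
    exact (hT'.2 t ht u (hsub hu) (hne u hu)).1 hu1.symm
  have h2 : t.2.1 ∉ C := by
    intro h
    obtain ⟨u, hu, hu1⟩ := Finset.mem_image.mp (hcol h)
    exact (hT'.2 t ht u (hsub hu) (hne u hu)).2.1 hu1.symm
  have h3 : t.2.2 ∈ S := (hQ t (hT'.1 ht)).mpr (iff_of_false h1 h2)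
  obtain ⟨u, hu, hu1⟩ := Finset.mem_image.mp (hsym h3)
  exact (hT'.2 t ht u (hsub hu) (hne u hu)).2.2 hu1.symm
theorem stmt14 {n : ℕ} (hn : Even n)
    (L : Finset (Fin n × Fin n × Fin n)) (hL : IsLatinSquare L)
    (R C : Finset (Fin n)) (hR : R.card = n / 2) (hC : C.card = n / 2)
    -- the submatrix on rows `R` and columns `C` uses only `n/2` symbols,
    -- i.e. it is a subsquare `A` of order `n/2`
    (hsub : ((L.filter (fun t => t.1 ∈ R ∧ t.2.1 ∈ C)).image (fun t => t.2.2)).card = n / 2)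
    -- `A` has a near-transversal
    (hnear : ∃ T, IsPartialTransversal (L.filter (fun t => t.1 ∈ R ∧ t.2.1 ∈ C)) T ∧
      T.card = n / 2 - 1) :
    ∀ ℓ : ℕ, n / 2 < ℓ → 4 * ℓ ≤ 3 * n → ℓ % 2 = (n / 2) % 2 →
      ∃ T, IsMaximalPartialTransversal L T ∧ T.card = ℓ := by
  intro ℓ hl1 hl2 hl3
  classical
  obtain ⟨m, hnm, hm2⟩ : ∃ m, n = 2 * m ∧ n / 2 = m := by
    obtain ⟨p, hp⟩ := hn; exact ⟨p, by omega, by omega⟩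
  rw [hm2] at hR hC hsub hnear hl1 hl3
  obtain ⟨j, hlj, hj1, hj4⟩ : ∃ j, ℓ = m + 2 * j ∧ 1 ≤ j ∧ 4 * j ≤ m :=
    ⟨(ℓ - m) / 2, by omega, by omega, by omega⟩
  have hmge : 4 ≤ m := by omega
  set S : Finset (Fin n) :=
    (L.filter (fun t => t.1 ∈ R ∧ t.2.1 ∈ C)).image (fun t => t.2.2) with hSdef
  choose symf hsymf hsymu using hL.1
  choose colf hcolf hcolu using hL.2.1
  choose rowf hrowf hrowu using hL.2.2
  have hQ : ∀ t ∈ L, (t.2.2 ∈ S ↔ (t.1 ∈ R ↔ t.2.1 ∈ C)) :=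
    quadrant hnm hR hC hsub hSdef symf colf rowf hsymf hsymu hcolf hcolu hrowf hrowu
  -- near-transversal of the subsquare
  obtain ⟨N, hN, hNcard⟩ := hnear
  have hNfilter : N ⊆ L.filter (fun t => t.1 ∈ R ∧ t.2.1 ∈ C) := hN.1
  have hNL : IsPartialTransversal L N :=
    ⟨hNfilter.trans (Finset.filter_subset _ _), hN.2⟩
  obtain ⟨N', hN'N, hN'card⟩ := Finset.exists_subset_card_eq (s := N) (n := m - j) (by omega)
  have hPTN' : IsPartialTransversal L N' := pt_mono hNL hN'N
  have hN'mem : ∀ t ∈ N', t.1 ∈ R ∧ t.2.1 ∈ C :=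
    fun t ht => (Finset.mem_filter.mp (hNfilter (hN'N ht))).2
  have hN'sym : ∀ t ∈ N', t.2.2 ∈ S := by
    intro t ht
    rw [hSdef]
    exact Finset.mem_image.mpr ⟨t, hNfilter (hN'N ht), rfl⟩
  set RN := N'.image (fun t => t.1) with hRN
  set CN := N'.image (fun t => t.2.1) with hCN
  set SN := N'.image (fun t => t.2.2) with hSN
  obtain ⟨hRNcard, hCNcard, hSNcard⟩ := pt_image_card hPTN'
  have hRNsub : RN ⊆ R := by
    intro a ha; obtain ⟨t, ht, rfl⟩ := Finset.mem_image.mp ha; exact (hN'mem t ht).1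
  have hCNsub : CN ⊆ C := by
    intro a ha; obtain ⟨t, ht, rfl⟩ := Finset.mem_image.mp ha; exact (hN'mem t ht).2
  have hSNsub : SN ⊆ S := by
    intro a ha; obtain ⟨t, ht, rfl⟩ := Finset.mem_image.mp ha; exact hN'sym t ht
  set Y := R \ RN with hY
  set Z := C \ CN with hZ
  set X := S \ SN with hX
  have hYcard : Y.card = j := by
    rw [hY, Finset.card_sdiff_of_subset hRNsub, hR, hRNcard, hN'card]; omega
  have hZcard : Z.card = j := by
    rw [hZ, Finset.card_sdiff_of_subset hCNsub, hC, hCNcard, hN'card]; omega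
  have hXcard : X.card = j := by
    rw [hX, Finset.card_sdiff_of_subset hSNsub, hsub, hSNcard, hN'card]; omega
  -- quadrant D part
  obtain ⟨PD, hPTD, hPDcard, hPDsym, hPDout⟩ :=
    greedyD hnm hR colf rowf hcolf hrowu hQ X Finset.sdiff_subset (by omega)
  rw [hXcard] at hPDcard
  -- quadrant B part
  obtain ⟨PB, hPTB, hPBcard, hPBrows, hPBout⟩ :=
    greedyB hnm hsub colf symf hcolf hsymu hQ (PD.image (fun t => t.2.1)) Y
      Finset.sdiff_subset
      (by have := Finset.card_image_le (s := PD) (f := fun t => t.2.1); omega)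
  rw [hYcard] at hPBcard
  -- quadrant C part
  obtain ⟨PC, hPTC, hPCcard, hPCcols, hPCout⟩ :=
    greedyC hnm hsub rowf symf hrowf hsymu hQ (PD.image (fun t => t.1))
      (PB.image (fun t => t.2.2)) Z Finset.sdiff_subset
      (by
        have h1 := Finset.card_image_le (s := PD) (f := fun t => t.1)
        have h2 := Finset.card_image_le (s := PB) (f := fun t => t.2.2)
        omega)
  rw [hZcard] at hPCcard
  -- membership facts
  have hPDX : ∀ u ∈ PD, u.2.2 ∈ X := by
    intro u hu; rw [← hPDsym]; exact Finset.mem_image_of_mem _ hu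
  have hPBY : ∀ u ∈ PB, u.1 ∈ Y := by
    intro u hu; rw [← hPBrows]; exact Finset.mem_image_of_mem _ hu
  have hPCZ : ∀ u ∈ PC, u.2.1 ∈ Z := by
    intro u hu; rw [← hPCcols]; exact Finset.mem_image_of_mem _ hu
  -- separations
  have sepND : ∀ t ∈ N', ∀ u ∈ PD, t.1 ≠ u.1 ∧ t.2.1 ≠ u.2.1 ∧ t.2.2 ≠ u.2.2 := by
    intro t ht u hu
    refine ⟨?_, ?_, ?_⟩
    · intro he; exact (hPDout u hu).1 (he ▸ (hN'mem t ht).1)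
    · intro he; exact (hPDout u hu).2 (he ▸ (hN'mem t ht).2)
    · intro he
      exact (Finset.mem_sdiff.mp (hPDX u hu)).2 (he ▸ Finset.mem_image_of_mem _ ht)
  have sepNB : ∀ t ∈ N', ∀ u ∈ PB, t.1 ≠ u.1 ∧ t.2.1 ≠ u.2.1 ∧ t.2.2 ≠ u.2.2 := by
    intro t ht u hu
    refine ⟨?_, ?_, ?_⟩
    · intro he
      exact (Finset.mem_sdiff.mp (hPBY u hu)).2 (he ▸ Finset.mem_image_of_mem _ ht)
    · intro he; exact (hPBout u hu).1.1 (he ▸ (hN'mem t ht).2)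
    · intro he; exact (hPBout u hu).2 (he ▸ hN'sym t ht)
  have sepNC : ∀ t ∈ N', ∀ u ∈ PC, t.1 ≠ u.1 ∧ t.2.1 ≠ u.2.1 ∧ t.2.2 ≠ u.2.2 := by
    intro t ht u hu
    refine ⟨?_, ?_, ?_⟩
    · intro he; exact (hPCout u hu).1.1 (he ▸ (hN'mem t ht).1)
    · intro he
      exact (Finset.mem_sdiff.mp (hPCZ u hu)).2 (he ▸ Finset.mem_image_of_mem _ ht)
    · intro he; exact (hPCout u hu).2.1 (he ▸ hN'sym t ht)
  have sepDB : ∀ t ∈ PD, ∀ u ∈ PB, t.1 ≠ u.1 ∧ t.2.1 ≠ u.2.1 ∧ t.2.2 ≠ u.2.2 := by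
    intro t ht u hu
    refine ⟨?_, ?_, ?_⟩
    · intro he
      exact (hPDout t ht).1 (he ▸ (Finset.mem_sdiff.mp (hPBY u hu)).1)
    · intro he; exact (hPBout u hu).1.2 (he ▸ Finset.mem_image_of_mem _ ht)
    · intro he
      exact (hPBout u hu).2 (he ▸ (Finset.mem_sdiff.mp (hPDX t ht)).1)
  have sepDC : ∀ t ∈ PD, ∀ u ∈ PC, t.1 ≠ u.1 ∧ t.2.1 ≠ u.2.1 ∧ t.2.2 ≠ u.2.2 := by
    intro t ht u hu
    refine ⟨?_, ?_, ?_⟩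
    · intro he; exact (hPCout u hu).1.2 (he ▸ Finset.mem_image_of_mem _ ht)
    · intro he
      exact (hPDout t ht).2 (he ▸ (Finset.mem_sdiff.mp (hPCZ u hu)).1)
    · intro he
      exact (hPCout u hu).2.1 (he ▸ (Finset.mem_sdiff.mp (hPDX t ht)).1)
  have sepBC : ∀ t ∈ PB, ∀ u ∈ PC, t.1 ≠ u.1 ∧ t.2.1 ≠ u.2.1 ∧ t.2.2 ≠ u.2.2 := by
    intro t ht u hu
    refine ⟨?_, ?_, ?_⟩
    · intro he
      exact (hPCout u hu).1.1 (he ▸ (Finset.mem_sdiff.mp (hPBY t ht)).1)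
    · intro he
      exact (hPBout t ht).1.1 (he ▸ (Finset.mem_sdiff.mp (hPCZ u hu)).1)
    · intro he; exact (hPCout u hu).2.2 (he ▸ Finset.mem_image_of_mem _ ht)
  -- the big transversal
  set T : Finset (Fin n × Fin n × Fin n) := ((N' ∪ PD) ∪ PB) ∪ PC with hT
  have sep2 : ∀ t ∈ N' ∪ PD, ∀ u ∈ PB, t.1 ≠ u.1 ∧ t.2.1 ≠ u.2.1 ∧ t.2.2 ≠ u.2.2 := by
    intro t ht u hu
    rcases Finset.mem_union.mp ht with h | h
    · exact sepNB t h u hu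
    · exact sepDB t h u hu
  have sep3 : ∀ t ∈ (N' ∪ PD) ∪ PB, ∀ u ∈ PC,
      t.1 ≠ u.1 ∧ t.2.1 ≠ u.2.1 ∧ t.2.2 ≠ u.2.2 := by
    intro t ht u hu
    rcases Finset.mem_union.mp ht with h | h
    · rcases Finset.mem_union.mp h with h' | h'
      · exact sepNC t h' u hu
      · exact sepDC t h' u hu
    · exact sepBC t h u hu
  have hPTT : IsPartialTransversal L T :=
    pt_union (pt_union (pt_union hPTN' hPTD sepND) hPTB sep2) hPTC sep3
  have hTcard : T.card = ℓ := by
    rw [hT, Finset.card_union_of_disjoint, Finset.card_union_of_disjoint,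
      Finset.card_union_of_disjoint (disj_of_sep sepND)]
    · rw [hN'card, hPDcard, hPBcard, hPCcard]; omega
    · exact Finset.disjoint_union_left.mpr ⟨disj_of_sep sepNB, disj_of_sep sepDB⟩
    · exact Finset.disjoint_union_left.mpr
        ⟨Finset.disjoint_union_left.mpr ⟨disj_of_sep sepNC, disj_of_sep sepDC⟩,
         disj_of_sep sepBC⟩
  have hrowcov : R ⊆ T.image (fun t => t.1) := by
    intro a ha
    rw [hT]
    simp only [Finset.image_union]
    by_cases h : a ∈ RN
    · exact Finset.mem_union_left _ (Finset.mem_union_left _ (Finset.mem_union_left _ h))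
    · refine Finset.mem_union_left _ (Finset.mem_union_right _ ?_)
      rw [hPBrows]
      exact Finset.mem_sdiff.mpr ⟨ha, h⟩
  have hcolcov : C ⊆ T.image (fun t => t.2.1) := by
    intro a ha
    rw [hT]
    simp only [Finset.image_union]
    by_cases h : a ∈ CN
    · exact Finset.mem_union_left _ (Finset.mem_union_left _ (Finset.mem_union_left _ h))
    · refine Finset.mem_union_right _ ?_
      rw [hPCcols]
      exact Finset.mem_sdiff.mpr ⟨ha, h⟩
  have hsymcov : S ⊆ T.image (fun t => t.2.2) := by
    intro a ha
    rw [hT]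
    simp only [Finset.image_union]
    by_cases h : a ∈ SN
    · exact Finset.mem_union_left _ (Finset.mem_union_left _ (Finset.mem_union_left _ h))
    · refine Finset.mem_union_left _ (Finset.mem_union_left _ (Finset.mem_union_right _ ?_))
      rw [hPDsym]
      exact Finset.mem_sdiff.mpr ⟨ha, h⟩
  exact ⟨T, maximal_of hQ T hPTT hrowcov hcolcov hsymcov, hTcard⟩
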